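/- Let S and r be parameters with 0 < S < 4r, and let u₀ be the standing wave. Then the quantity c₁ := −(∫_ℝ (g(u₀(x)) + (2/r)(u₀'(x))²)·u₀'(x)·e^{(4S/r)(u₀(x)² − u₀(x))} dx) / (∫_ℝ (u₀'(x))²·e^{(4S/r)(u₀(x)² − u₀(x))} dx) equals (∫₀¹ (r/(4S))·(1 − e^{−(4S/r)(u − u²)}) du) / (∫₀¹ ((r²/(8S))·e^{(4S/r)(u − u²)} − (r/2)(u − u²) − r²/(8S))^{1/2} · e^{−(4S/r)(u − u²)} du). -/

import Mathlib

open Real Filter Topology MeasureTheory intervalIntegral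

noncomputable def fpoly (u : ℝ) : ℝ := u * (2 * u - 1) * (1 - u)

noncomputable def gpoly (u : ℝ) : ℝ := u * (1 - u)

theorem speed_coefficient_formula (S r : ℝ) (hS : 0 < S) (hSr : S < 4 * r)
    (u₀ : ℝ → ℝ) (hu : ContDiff ℝ 2 u₀)
    (hode : ∀ x : ℝ, deriv (deriv u₀) x + S * fpoly (u₀ x)
      + (2 * S / r) * (2 * u₀ x - 1) * (deriv u₀ x) ^ 2 = 0)
    (hlim1 : Tendsto u₀ atBot (𝓝 1)) (hlim0 : Tendsto u₀ atTop (𝓝 0))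
    (hnorm : u₀ 0 = 1 / 2) (hmono : StrictAnti u₀)
    (hbound : ∀ x : ℝ, 0 < u₀ x ∧ u₀ x < 1) :
    -(∫ x : ℝ, (gpoly (u₀ x) + (2 / r) * (deriv u₀ x) ^ 2) * deriv u₀ x *
          Real.exp ((4 * S / r) * ((u₀ x) ^ 2 - u₀ x))) /
        (∫ x : ℝ, (deriv u₀ x) ^ 2 * Real.exp ((4 * S / r) * ((u₀ x) ^ 2 - u₀ x)))
      = (∫ u in (0:ℝ)..1, r / (4 * S) * (1 - Real.exp (-(4 * S / r) * (u - u ^ 2)))) /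
        (∫ u in (0:ℝ)..1,
          Real.sqrt (r ^ 2 / (8 * S) * Real.exp ((4 * S / r) * (u - u ^ 2))
            - r / 2 * (u - u ^ 2) - r ^ 2 / (8 * S)) *
          Real.exp (-(4 * S / r) * (u - u ^ 2))) := by
  have hr : 0 < r := by linarith
  have hr' : r ≠ 0 := ne_of_gt hr
  have hS' : S ≠ 0 := ne_of_gt hS
  -- regularity
  have hd1 : ContDiff ℝ 1 (deriv u₀) := by
    have := (contDiff_succ_iff_deriv (n := 1)).mp (by exact_mod_cast hu)
    exact this.2.2
  have hdiff : Differentiable ℝ u₀ := hu.differentiable (by norm_num)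
  have hdiffd : Differentiable ℝ (deriv u₀) := hd1.differentiable (by norm_num)
  have hcontd : Continuous (deriv u₀) := hdiffd.continuous
  -- the derivative is nonpositive
  have vneg : ∀ x, deriv u₀ x ≤ 0 := by
    intro x
    have h := hasDerivAt_iff_tendsto_slope.mp (hdiff x).hasDerivAt
    have h2 : Tendsto (slope u₀ x) (𝓝[>] x) (𝓝 (deriv u₀ x)) :=
      h.mono_left (nhdsWithin_mono x fun y hy => ne_of_gt hy)
    refine le_of_tendsto h2 ?_
    filter_upwards [self_mem_nhdsWithin] with y hy
    rw [slope_def_field]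
    have h3 : u₀ y < u₀ x := hmono hy
    have h4 : x < y := hy
    apply div_nonpos_of_nonpos_of_nonneg <;> linarith
  -- conserved quantity
  set P : ℝ → ℝ := fun u => r ^ 2 / (8 * S) * Real.exp ((4 * S / r) * (u - u ^ 2))
      - r / 2 * (u - u ^ 2) - r ^ 2 / (8 * S) with hP
  set G : ℝ → ℝ := fun u => (r / 2 * (u ^ 2 - u) - r ^ 2 / (8 * S)) *
      Real.exp ((4 * S / r) * (u ^ 2 - u)) with hG
  have hGcont : Continuous G := by rw [hG]; fun_prop
  set W : ℝ → ℝ := fun x => (deriv u₀ x) ^ 2 * Real.exp ((4 * S / r) * ((u₀ x) ^ 2 - u₀ x))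
      - G (u₀ x) with hW
  have hW0 : ∀ x, HasDerivAt W 0 x := by
    intro x
    have h1 : HasDerivAt u₀ (deriv u₀ x) x := (hdiff x).hasDerivAt
    have h2 : HasDerivAt (deriv u₀) (deriv (deriv u₀) x) x := (hdiffd x).hasDerivAt
    have hq : HasDerivAt (fun y => (u₀ y) ^ 2 - u₀ y)
        (2 * u₀ x ^ 1 * deriv u₀ x - deriv u₀ x) x := (h1.pow 2).sub h1
    have hexp : HasDerivAt (fun y => Real.exp ((4 * S / r) * ((u₀ y) ^ 2 - u₀ y)))
        (Real.exp ((4 * S / r) * ((u₀ x) ^ 2 - u₀ x)) *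
          ((4 * S / r) * (2 * u₀ x ^ 1 * deriv u₀ x - deriv u₀ x))) x :=
      (hq.const_mul (4 * S / r)).exp
    have hsq : HasDerivAt (fun y => (deriv u₀ y) ^ 2)
        (2 * deriv u₀ x ^ 1 * deriv (deriv u₀) x) x := h2.pow 2
    have hcoef : HasDerivAt (fun y => r / 2 * ((u₀ y) ^ 2 - u₀ y) - r ^ 2 / (8 * S))
        (r / 2 * (2 * u₀ x ^ 1 * deriv u₀ x - deriv u₀ x)) x :=
      (hq.const_mul (r / 2)).sub_const _
    have hWd := (hsq.mul hexp).sub (hcoef.mul hexp)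
    refine hWd.congr_deriv ?_
    have h := hode x
    simp only [fpoly] at h
    have ha : deriv (deriv u₀) x = -(S * (u₀ x * (2 * u₀ x - 1) * (1 - u₀ x)))
        - (2 * S / r) * (2 * u₀ x - 1) * (deriv u₀ x) ^ 2 := by linarith
    rw [ha]
    field_simp
    ring
  have hWconst : ∀ x, W x = W 0 := fun x =>
    is_const_of_deriv_eq_zero (fun y => (hW0 y).differentiableAt)
      (fun y => (hW0 y).deriv) x 0
  have hWconst' : ∀ x, (deriv u₀ x) ^ 2 * Real.exp ((4 * S / r) * ((u₀ x) ^ 2 - u₀ x))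
      - G (u₀ x) = W 0 := by
    intro x
    have := hWconst x
    simpa only [hW] using this
  -- evaluate the constant
  have hC : W 0 = r ^ 2 / (8 * S) := by
    set C := W 0 with hCdef
    set φ : ℝ → ℝ := fun t => (C + G t) / Real.exp ((4 * S / r) * (t ^ 2 - t)) with hφ
    have hφc : Continuous φ := by
      apply Continuous.div (by fun_prop) (by fun_prop)
      exact fun t => Real.exp_ne_zero _
    have hveq : ∀ x, (deriv u₀ x) ^ 2 = φ (u₀ x) := by
      intro x
      have h := hWconst' x
      rw [hφ]
      rw [eq_div_iff (Real.exp_ne_zero _)]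
      linarith
    have hφ0 : φ 0 = C - r ^ 2 / (8 * S) := by
      simp [hφ, hG]; ring
    have hlimv : Tendsto (fun x => (deriv u₀ x) ^ 2) atTop (𝓝 (C - r ^ 2 / (8 * S))) := by
      rw [show (fun x => (deriv u₀ x) ^ 2) = φ ∘ u₀ from funext fun x => hveq x, ← hφ0]
      exact (hφc.continuousAt.tendsto).comp hlim0
    set L := C - r ^ 2 / (8 * S) with hL
    have hL0 : 0 ≤ L := ge_of_tendsto' hlimv fun x => sq_nonneg _
    have hLle : L ≤ 0 := by
      by_contra hpos
      push_neg at hpos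
      have hsqL : 0 < Real.sqrt L := Real.sqrt_pos.mpr hpos
      have hvlim : Tendsto (deriv u₀) atTop (𝓝 (-Real.sqrt L)) := by
        have h1 : Tendsto (fun x => Real.sqrt ((deriv u₀ x) ^ 2)) atTop (𝓝 (Real.sqrt L)) :=
          (Real.continuous_sqrt.continuousAt.tendsto).comp hlimv
        have h2 : ∀ x, deriv u₀ x = -Real.sqrt ((deriv u₀ x) ^ 2) := by
          intro x
          rw [Real.sqrt_sq_eq_abs, abs_of_nonpos (vneg x)]
          ring
        rw [show deriv u₀ = fun x => -Real.sqrt ((deriv u₀ x) ^ 2) from funext h2]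
        exact h1.neg
      have hev : ∀ᶠ x in atTop, deriv u₀ x < -Real.sqrt L / 2 :=
        hvlim.eventually_lt_const (by linarith)
      obtain ⟨x₀, hx₀⟩ := eventually_atTop.mp hev
      set x₁ := x₀ + 4 / Real.sqrt L with hx₁
      have hle : x₀ ≤ x₁ := by
        rw [hx₁]
        have : 0 < 4 / Real.sqrt L := by positivity
        linarith
      have hineq : u₀ x₁ - u₀ x₀ ≤ (x₁ - x₀) * (-Real.sqrt L / 2) := by
        rw [← intervalIntegral.integral_deriv_eq_sub (fun t _ => hdiff t)
          (hcontd.intervalIntegrable _ _)]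
        calc (∫ t in x₀..x₁, deriv u₀ t) ≤ ∫ _t in x₀..x₁, -Real.sqrt L / 2 :=
              intervalIntegral.integral_mono_on hle (hcontd.intervalIntegrable _ _)
                intervalIntegrable_const (fun t ht => (hx₀ t ht.1).le)
          _ = (x₁ - x₀) * (-Real.sqrt L / 2) := by
              rw [intervalIntegral.integral_const]; simp [smul_eq_mul]
      have hcan : (4 / Real.sqrt L) * Real.sqrt L = 4 := div_mul_cancel₀ _ (ne_of_gt hsqL)
      have h2 : u₀ x₁ ≤ u₀ x₀ - 2 := by
        have hx10 : x₁ - x₀ = 4 / Real.sqrt L := by rw [hx₁]; ring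
        rw [hx10] at hineq
        nlinarith
      have := (hbound x₁).1
      have := (hbound x₀).2
      linarith
    have : L = 0 := le_antisymm hLle hL0
    rw [hL] at this
    linarith
  -- the first integral
  have key : ∀ x, (deriv u₀ x) ^ 2 = P (u₀ x) := by
    intro x
    have h1 : (deriv u₀ x) ^ 2 * Real.exp ((4 * S / r) * ((u₀ x) ^ 2 - u₀ x))
        = r ^ 2 / (8 * S) + G (u₀ x) := by
      have := hWconst' x
      rw [hC] at this
      linarith
    have h2 : P (u₀ x) * Real.exp ((4 * S / r) * ((u₀ x) ^ 2 - u₀ x))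
        = r ^ 2 / (8 * S) + G (u₀ x) := by
      simp only [hP, hG]
      rw [show (4 * S / r) * (u₀ x - u₀ x ^ 2) = -((4 * S / r) * (u₀ x ^ 2 - u₀ x)) by ring,
        Real.exp_neg]
      field_simp
      ring
    have := h1.trans h2.symm
    exact mul_right_cancel₀ (Real.exp_ne_zero _) this
  have hsqrt : ∀ x, Real.sqrt (P (u₀ x)) = -deriv u₀ x := by
    intro x
    rw [← key x, show (deriv u₀ x) ^ 2 = (-deriv u₀ x) ^ 2 by ring,
      Real.sqrt_sq (by linarith [vneg x])]
  -- master substitution lemma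
  have master : ∀ F : ℝ → ℝ, Continuous F →
      Integrable (fun x => F (u₀ x) * deriv u₀ x) volume ∧
      (∫ x : ℝ, F (u₀ x) * deriv u₀ x) = ∫ u in (1:ℝ)..(0:ℝ), F u := by
    intro F hF
    have hFc : Continuous fun x => F (u₀ x) * deriv u₀ x :=
      (hF.comp hdiff.continuous).mul hcontd
    have hsub : ∀ T : ℝ, (∫ x in (-T)..T, F (u₀ x) * deriv u₀ x)
        = ∫ u in u₀ (-T)..u₀ T, F u := by
      intro T
      have h := intervalIntegral.integral_comp_smul_deriv (a := -T) (b := T)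
        (f := u₀) (f' := deriv u₀) (g := F)
        (fun x _ => (hdiff x).hasDerivAt) hcontd.continuousOn hF
      rw [← h]
      apply intervalIntegral.integral_congr
      intro x _
      simp [smul_eq_mul, mul_comm]
    obtain ⟨M, hM⟩ := (isCompact_Icc (a := (0:ℝ)) (b := 1)).exists_bound_of_continuousOn
      hF.continuousOn
    have hM0 : 0 ≤ M := le_trans (norm_nonneg _) (hM 0 (by norm_num))
    have hFu : ∀ x, |F (u₀ x)| ≤ M := fun x =>
      hM _ ⟨(hbound x).1.le, (hbound x).2.le⟩
    have hfi : ∀ T : ℝ, IntegrableOn (fun x => F (u₀ x) * deriv u₀ x) (Set.Ioc (-T) T) volume :=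
      fun T => hFc.integrableOn_Ioc
    have hbdd : ∀ᶠ T in atTop, (∫ x in (-T)..T, ‖F (u₀ x) * deriv u₀ x‖) ≤ M := by
      filter_upwards [eventually_ge_atTop (0:ℝ)] with T hT
      have h1 : (∫ x in (-T)..T, ‖F (u₀ x) * deriv u₀ x‖)
          ≤ ∫ x in (-T)..T, M * (-deriv u₀ x) := by
        apply intervalIntegral.integral_mono_on (by linarith)
          (hFc.norm.intervalIntegrable _ _)
          ((continuous_const.mul hcontd.neg).intervalIntegrable _ _)
        intro t _
        rw [Real.norm_eq_abs, abs_mul, abs_of_nonpos (vneg t)]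
        exact mul_le_mul_of_nonneg_right (hFu t) (by linarith [vneg t])
      have h2 : (∫ x in (-T)..T, M * (-deriv u₀ x)) = M * (u₀ (-T) - u₀ T) := by
        rw [intervalIntegral.integral_const_mul, intervalIntegral.integral_neg,
          intervalIntegral.integral_deriv_eq_sub (fun t _ => hdiff t)
            (hcontd.intervalIntegrable _ _)]
        ring
      have h3 : M * (u₀ (-T) - u₀ T) ≤ M := by
        have := (hbound (-T)).2
        have := (hbound T).1
        nlinarith
      linarith
    have hint : Integrable (fun x => F (u₀ x) * deriv u₀ x) volume :=
      integrable_of_intervalIntegral_norm_bounded M hfi tendsto_neg_atTop_atBot tendsto_id hbdd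
    have htend1 : Tendsto (fun T : ℝ => ∫ x in (-T)..T, F (u₀ x) * deriv u₀ x) atTop
        (𝓝 (∫ x : ℝ, F (u₀ x) * deriv u₀ x)) :=
      intervalIntegral_tendsto_integral hint tendsto_neg_atTop_atBot tendsto_id
    set Φ : ℝ → ℝ := fun t => ∫ u in (0:ℝ)..t, F u with hΦ
    have hΦc : Continuous Φ :=
      intervalIntegral.continuous_primitive (fun a b => hF.intervalIntegrable a b) 0
    have hsplit : ∀ a b : ℝ, (∫ u in a..b, F u) = Φ b - Φ a := by
      intro a b
      rw [hΦ]
      exact (intervalIntegral.integral_interval_sub_left (hF.intervalIntegrable 0 b)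
        (hF.intervalIntegrable 0 a)).symm
    have htend2 : Tendsto (fun T : ℝ => ∫ u in u₀ (-T)..u₀ T, F u) atTop
        (𝓝 (∫ u in (1:ℝ)..(0:ℝ), F u)) := by
      simp only [hsplit]
      have l1 : Tendsto (fun T : ℝ => Φ (u₀ T)) atTop (𝓝 (Φ 0)) :=
        (hΦc.continuousAt.tendsto).comp hlim0
      have l2 : Tendsto (fun T : ℝ => Φ (u₀ (-T))) atTop (𝓝 (Φ 1)) :=
        (hΦc.continuousAt.tendsto).comp (hlim1.comp tendsto_neg_atTop_atBot)
      exact l1.sub l2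
    refine ⟨hint, tendsto_nhds_unique htend1 ?_⟩
    simp only [hsub]
    exact htend2
  -- transformed integrands
  set F₁ : ℝ → ℝ := fun u => (gpoly u + 2 / r * P u) *
      Real.exp ((4 * S / r) * (u ^ 2 - u)) with hF₁
  set F₂ : ℝ → ℝ := fun u => Real.sqrt (P u) *
      Real.exp ((4 * S / r) * (u ^ 2 - u)) with hF₂
  have hF₁c : Continuous F₁ := by
    simp only [hF₁, hP, gpoly]; fun_prop
  have hF₂c : Continuous F₂ := by
    simp only [hF₂]
    apply Continuous.mul _ (by fun_prop)
    exact Real.continuous_sqrt.comp (by simp only [hP]; fun_prop)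
  obtain ⟨hint₁, heq₁⟩ := master F₁ hF₁c
  obtain ⟨hint₂, heq₂⟩ := master F₂ hF₂c
  have hnum : (∫ x : ℝ, (gpoly (u₀ x) + (2 / r) * (deriv u₀ x) ^ 2) * deriv u₀ x *
      Real.exp ((4 * S / r) * ((u₀ x) ^ 2 - u₀ x))) = ∫ u in (1:ℝ)..(0:ℝ), F₁ u := by
    rw [← heq₁]
    congr 1
    funext x
    rw [key x]
    simp only [hF₁]
    ring
  have hden : (∫ x : ℝ, (deriv u₀ x) ^ 2 * Real.exp ((4 * S / r) * ((u₀ x) ^ 2 - u₀ x)))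
      = -∫ u in (1:ℝ)..(0:ℝ), F₂ u := by
    rw [← heq₂, ← MeasureTheory.integral_neg]
    congr 1
    funext x
    simp only [hF₂]
    rw [hsqrt x]
    ring
  rw [hnum, hden]
  rw [intervalIntegral.integral_symm (a := 0) (b := 1) (f := F₁),
    intervalIntegral.integral_symm (a := 0) (b := 1) (f := F₂)]
  rw [neg_neg, neg_neg]
  congr 1
  · apply intervalIntegral.integral_congr
    intro u _
    simp only [hF₁, hP, gpoly]
    rw [show (4 * S / r) * (u ^ 2 - u) = -((4 * S / r) * (u - u ^ 2)) by ring, Real.exp_neg,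
      show -(4 * S / r) * (u - u ^ 2) = -((4 * S / r) * (u - u ^ 2)) by ring, Real.exp_neg]
    field_simp
    ring
  · apply intervalIntegral.integral_congr
    intro u _
    simp only [hF₂, hP]
    congr 2
    ring
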